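/- arXiv:2405.07908 — 3 statements merged into one kernel-verified Lean document; each statement's English description precedes it below -/
import Mathlib

section
/- (Unique arc transition between two planar states.) Let (x₀, ψ₀) and (x_G, ψ_G) be two planar states in ℝ² × ℝ with Δψ := ψ_G − ψ₀ ∈ [−π, π). Define the 2×2 matrix M(ψ₀, Δψ) = (1/Δψ) · (Rot(ψ₀ + Δψ − π/2) − Rot(ψ₀ − π/2)) if Δψ ≠ 0 and M(ψ₀, 0) = Rot(ψ₀). Then there exists a unique vector u ∈ ℝ² such that x_G = x₀ + M(ψ₀, Δψ) u. Consequently, for any duration t̄ > 0 there is exactly one constant body-frame velocity p = (v, ω) with ω t̄ = Δψ and v t̄ = u whose induced state trajectory carries (x₀, ψ₀) to (x_G, ψ_G) at time t̄. -/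
open Real Matrix

/-- The planar rotation matrix `Rot θ = [[cos θ, −sin θ],[sin θ, cos θ]]`. -/
noncomputable def Rot (θ : ℝ) : Matrix (Fin 2) (Fin 2) ℝ :=
  !![Real.cos θ, -Real.sin θ; Real.sin θ, Real.cos θ]

/-- The matrix `M(ψ₀, Δψ)` governing an arc transition: for `Δψ ≠ 0` it is
`(1/Δψ) • (Rot (ψ₀ + Δψ − π/2) − Rot (ψ₀ − π/2))`, and `M(ψ₀, 0) = Rot ψ₀`. -/
noncomputable def arcMat (ψ₀ Δψ : ℝ) : Matrix (Fin 2) (Fin 2) ℝ :=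
  if Δψ = 0 then Rot ψ₀ else (1 / Δψ) • (Rot (ψ₀ + Δψ - π / 2) - Rot (ψ₀ - π / 2))

lemma Rot_sub_pi_div_two (θ : ℝ) :
    Rot (θ - π/2) = !![Real.sin θ, Real.cos θ; -Real.cos θ, Real.sin θ] := by
  simp [Rot, Real.cos_sub_pi_div_two, Real.sin_sub_pi_div_two]

lemma rot_deriv (ψ₀ ω : ℝ) (hω : ω ≠ 0) (v : Fin 2 → ℝ) (τ : ℝ) :
    HasDerivAt (fun t => (1/ω) • (Rot (ψ₀ + ω * t - π/2) *ᵥ v)) (Rot (ψ₀ + ω * τ) *ᵥ v) τ := by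
  simp only [Rot_sub_pi_div_two]
  rw [hasDerivAt_pi]
  intro i
  have hθ : HasDerivAt (fun t : ℝ => ψ₀ + ω * t) ω τ := by
    simpa using ((hasDerivAt_id τ).const_mul ω).const_add ψ₀
  have hc : HasDerivAt (fun t : ℝ => Real.cos (ψ₀ + ω * t))
      (-Real.sin (ψ₀ + ω * τ) * ω) τ := (Real.hasDerivAt_cos _).comp τ hθ
  have hs : HasDerivAt (fun t : ℝ => Real.sin (ψ₀ + ω * t))
      (Real.cos (ψ₀ + ω * τ) * ω) τ := (Real.hasDerivAt_sin _).comp τ hθ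
  fin_cases i
  · have h := (((hs.mul_const (v 0)).add (hc.mul_const (v 1))).const_mul (1/ω))
    convert h using 1
    · ext t
      simp [Matrix.mulVec, dotProduct, Fin.sum_univ_two]
    · simp [Rot, Matrix.mulVec, dotProduct, Fin.sum_univ_two]
    · simp [Rot, Matrix.mulVec, dotProduct, Fin.sum_univ_two]
      field_simp
  · have h := ((((hc.neg).mul_const (v 0)).add (hs.mul_const (v 1))).const_mul (1/ω))
    convert h using 1
    · ext t
      simp [Matrix.mulVec, dotProduct, Fin.sum_univ_two]
    · simp [Rot, Matrix.mulVec, dotProduct, Fin.sum_univ_two]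
    · simp [Rot, Matrix.mulVec, dotProduct, Fin.sum_univ_two]
      field_simp

lemma rot_cont (ψ₀ ω : ℝ) (v : Fin 2 → ℝ) :
    Continuous (fun τ : ℝ => Rot (ψ₀ + ω * τ) *ᵥ v) := by
  apply continuous_pi
  intro i
  fin_cases i <;>
  · simp [Rot, Matrix.mulVec, dotProduct, Fin.sum_univ_two]
    fun_prop

lemma integral_rot (ψ₀ ω T : ℝ) (hω : ω ≠ 0) (v : Fin 2 → ℝ) :
    ∫ τ in (0:ℝ)..T, Rot (ψ₀ + ω * τ) *ᵥ v
      = (1/ω) • ((Rot (ψ₀ + ω * T - π/2) - Rot (ψ₀ - π/2)) *ᵥ v) := by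
  have h := intervalIntegral.integral_eq_sub_of_hasDerivAt
    (f := fun t => (1/ω) • (Rot (ψ₀ + ω * t - π/2) *ᵥ v))
    (f' := fun t => Rot (ψ₀ + ω * t) *ᵥ v)
    (fun τ _ => rot_deriv ψ₀ ω hω v τ)
    ((rot_cont ψ₀ ω v).intervalIntegrable 0 T)
  rw [h, Matrix.sub_mulVec, smul_sub]
  norm_num

lemma arcMat_det_ne_zero (ψ₀ Δψ : ℝ) (h : Δψ ∈ Set.Ico (-π) π) :
    (arcMat ψ₀ Δψ).det ≠ 0 := by
  by_cases h0 : Δψ = 0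
  · simp [arcMat, h0, Rot, Matrix.det_fin_two_of]
    nlinarith [Real.sin_sq_add_cos_sq ψ₀]
  · have hcos : Real.cos Δψ < 1 := by
      rcases lt_or_eq_of_le (Real.cos_le_one Δψ) with h' | h'
      · exact h'
      · exfalso
        have := (Real.cos_eq_one_iff_of_lt_of_lt
          (by nlinarith [h.1, Real.pi_pos] : -(2*π) < Δψ)
          (by nlinarith [h.2, Real.pi_pos] : Δψ < 2*π)).mp h'
        exact h0 this
    have key : (Rot (ψ₀ + Δψ - π/2) - Rot (ψ₀ - π/2)).det = 2 - 2 * Real.cos Δψ := by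
      have hab : Real.cos ((ψ₀ + Δψ - π/2) - (ψ₀ - π/2)) = Real.cos Δψ := by ring_nf
      rw [Real.cos_sub] at hab
      simp [Rot, Matrix.det_fin_two_of]
      nlinarith [Real.sin_sq_add_cos_sq (ψ₀ + Δψ - π/2), Real.sin_sq_add_cos_sq (ψ₀ - π/2)]
    simp only [arcMat, h0, if_false, Matrix.det_smul, key, Fintype.card_fin]
    have : (1/Δψ)^2 > 0 := by positivity
    nlinarith

/-- Unique arc transition between two planar states: for states `(x₀, ψ₀)` and `(x_G, ψ_G)`
with `Δψ = ψ_G − ψ₀ ∈ [−π, π)`, there is a unique `u` with `x_G = x₀ + M(ψ₀, Δψ) u`;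
consequently, for any duration `T > 0` there is exactly one constant body-frame velocity
`p = (v, ω)` with `ω T = Δψ` and `v T = u` whose induced state trajectory carries
`(x₀, ψ₀)` to `(x_G, ψ_G)` at time `T`. -/
theorem unique_arc_transition (x₀ xG : Fin 2 → ℝ) (ψ₀ ψG : ℝ)
    (hmem : ψG - ψ₀ ∈ Set.Ico (-π) π) :
    (∃! u : Fin 2 → ℝ, xG = x₀ + arcMat ψ₀ (ψG - ψ₀) *ᵥ u) ∧
    (∀ u : Fin 2 → ℝ, xG = x₀ + arcMat ψ₀ (ψG - ψ₀) *ᵥ u →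
      ∀ T : ℝ, 0 < T →
        ∃! p : (Fin 2 → ℝ) × ℝ,
          p.2 * T = ψG - ψ₀ ∧ T • p.1 = u ∧
          x₀ + (∫ τ in (0:ℝ)..T, Rot (ψ₀ + p.2 * τ) *ᵥ p.1) = xG ∧
          ψ₀ + p.2 * T = ψG) := by
  set Δψ := ψG - ψ₀ with hΔ
  set M := arcMat ψ₀ Δψ with hM
  have hdet : IsUnit M.det := isUnit_iff_ne_zero.mpr (arcMat_det_ne_zero ψ₀ Δψ hmem)
  constructor
  · refine ⟨M⁻¹ *ᵥ (xG - x₀), ?_, ?_⟩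
    · show xG = x₀ + M *ᵥ (M⁻¹ *ᵥ (xG - x₀))
      rw [Matrix.mulVec_mulVec, Matrix.mul_nonsing_inv _ hdet, Matrix.one_mulVec]
      abel
    · intro y hy
      have h1 : M *ᵥ y = xG - x₀ := by rw [hy]; abel
      rw [← h1, Matrix.mulVec_mulVec, Matrix.nonsing_inv_mul _ hdet, Matrix.one_mulVec]
  · intro u hu T hT
    have hT0 : T ≠ 0 := hT.ne'
    refine ⟨(T⁻¹ • u, Δψ / T), ⟨?_, ?_, ?_, ?_⟩, ?_⟩
    · exact div_mul_cancel₀ _ hT0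
    · rw [smul_smul, mul_inv_cancel₀ hT0, one_smul]
    · -- integral computation
      have key : (∫ τ in (0:ℝ)..T, Rot (ψ₀ + (Δψ / T) * τ) *ᵥ (T⁻¹ • u)) = M *ᵥ u := by
        by_cases h0 : Δψ = 0
        · simp only [h0, zero_div, zero_mul, add_zero]
          rw [intervalIntegral.integral_const, Matrix.mulVec_smul, smul_comm, sub_zero,
            smul_smul, inv_mul_cancel₀ hT0, one_smul]
          simp [hM, arcMat, h0]
        · have hω : Δψ / T ≠ 0 := div_ne_zero h0 hT0
          rw [integral_rot ψ₀ (Δψ/T) T hω, div_mul_cancel₀ _ hT0,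
            Matrix.mulVec_smul, smul_smul]
          have : 1 / (Δψ / T) * T⁻¹ = 1 / Δψ := by field_simp
          rw [this, hM]
          simp only [arcMat, h0, if_false, Matrix.smul_mulVec]
      rw [key, ← hu]
    · rw [div_mul_cancel₀ _ hT0]; ring
    · rintro ⟨v, ω⟩ ⟨h1, h2, _, _⟩
      have hω : ω = Δψ / T := by field_simp at h1 ⊢; linarith
      have hv : v = T⁻¹ • u := by rw [← h2, smul_smul, inv_mul_cancel₀ hT0, one_smul]
      simp [hω, hv]
end

section
/- (Second-order accuracy of the three-arc decomposition.) Let (x₀, ψ₀) ∈ ℝ² × ℝ, let p₁, p₂, p₃ ∈ ℝ² × ℝ be constant body-frame velocities and λ₁, λ₂, λ₃ ≥ 0. For t ≥ 0 let E(t) ∈ ℝ² × ℝ be the final state obtained by starting at (x₀, ψ₀) and successively following the induced state trajectories of p₁ for duration λ₁ t, then p₂ for duration λ₂ t, then p₃ for duration λ₃ t; and let A(t) be the final state of the induced state trajectory of the single velocity p̄ = λ₁ p₁ + λ₂ p₂ + λ₃ p₃ followed for duration t from (x₀, ψ₀). Then there exists a constant C ≥ 0 such that ‖E(t) − A(t)‖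 ≤ C t² for all t ∈ [0, 1]. -/
open Real Matrix MeasureTheory

/-- The state reached at time `τ` by following, from the planar state `s = (x, ψ)`, the
induced state trajectory of the constant body-frame velocity `p = (v, ω)`:
`(x + ∫₀^τ Rot (ψ + ω σ) v dσ, ψ + ω τ)`. -/
noncomputable def trajFrom (s : (Fin 2 → ℝ) × ℝ) (p : (Fin 2 → ℝ) × ℝ) (τ : ℝ) :
    (Fin 2 → ℝ) × ℝ :=
  (s.1 + ∫ σ in (0:ℝ)..τ, Rot (s.2 + p.2 * σ) *ᵥ p.1, s.2 + p.2 * τ)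

/-- The Euclidean norm on `ℝ² × ℝ ≅ ℝ³`. -/
noncomputable def normState (a : (Fin 2 → ℝ) × ℝ) : ℝ :=
  Real.sqrt (a.1 0 ^ 2 + a.1 1 ^ 2 + a.2 ^ 2)

lemma abs_cos_sub_cos' (a b : ℝ) : |Real.cos a - Real.cos b| ≤ |a - b| := by
  rw [Real.cos_sub_cos]
  have h1 : |Real.sin ((a+b)/2)| ≤ 1 := Real.abs_sin_le_one _
  have h2 : |Real.sin ((a-b)/2)| ≤ |a-b|/2 := by
    have := Real.abs_sin_le_abs (x := (a-b)/2)
    rwa [abs_div, abs_two] at this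
  have e : |(-2) * Real.sin ((a+b)/2) * Real.sin ((a-b)/2)|
      = 2 * |Real.sin ((a+b)/2)| * |Real.sin ((a-b)/2)| := by
    rw [abs_mul, abs_mul]; norm_num
  rw [e]
  nlinarith [abs_nonneg (Real.sin ((a+b)/2)), abs_nonneg (Real.sin ((a-b)/2))]

lemma abs_sin_sub_sin' (a b : ℝ) : |Real.sin a - Real.sin b| ≤ |a - b| := by
  rw [Real.sin_sub_sin]
  have h1 : |Real.cos ((a+b)/2)| ≤ 1 := Real.abs_cos_le_one _
  have h2 : |Real.sin ((a-b)/2)| ≤ |a-b|/2 := by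
    have := Real.abs_sin_le_abs (x := (a-b)/2)
    rwa [abs_div, abs_two] at this
  have e : |2 * Real.sin ((a-b)/2) * Real.cos ((a+b)/2)|
      = 2 * |Real.sin ((a-b)/2)| * |Real.cos ((a+b)/2)| := by
    rw [abs_mul, abs_mul]; norm_num
  rw [e]
  nlinarith [abs_nonneg (Real.sin ((a-b)/2)), abs_nonneg (Real.cos ((a+b)/2))]

lemma Rot_mulVec_zero (θ : ℝ) (v : Fin 2 → ℝ) :
    (Rot θ *ᵥ v) 0 = Real.cos θ * v 0 + -Real.sin θ * v 1 := by
  simp [Rot, Matrix.mulVec, dotProduct, Fin.sum_univ_two]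

lemma Rot_mulVec_one (θ : ℝ) (v : Fin 2 → ℝ) :
    (Rot θ *ᵥ v) 1 = Real.sin θ * v 0 + Real.cos θ * v 1 := by
  simp [Rot, Matrix.mulVec, dotProduct, Fin.sum_univ_two]

lemma Rot_lip (θ θ' : ℝ) (v : Fin 2 → ℝ) (j : Fin 2) :
    |(Rot θ *ᵥ v) j - (Rot θ' *ᵥ v) j| ≤ |θ - θ'| * (|v 0| + |v 1|) := by
  have hc := abs_cos_sub_cos' θ θ'
  have hs := abs_sin_sub_sin' θ θ'
  fin_cases j <;> simp only [Fin.zero_eta, Fin.mk_one, Rot_mulVec_zero, Rot_mulVec_one]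
  · have e : Real.cos θ * v 0 + -Real.sin θ * v 1 - (Real.cos θ' * v 0 + -Real.sin θ' * v 1)
        = (Real.cos θ - Real.cos θ') * v 0 + (-(Real.sin θ - Real.sin θ')) * v 1 := by ring
    rw [e]
    calc |(Real.cos θ - Real.cos θ') * v 0 + (-(Real.sin θ - Real.sin θ')) * v 1|
        ≤ |(Real.cos θ - Real.cos θ') * v 0| + |(-(Real.sin θ - Real.sin θ')) * v 1| :=
          abs_add_le _ _
      _ = |Real.cos θ - Real.cos θ'| * |v 0| + |Real.sin θ - Real.sin θ'| * |v 1| := by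
          rw [abs_mul, abs_mul, abs_neg]
      _ ≤ |θ - θ'| * |v 0| + |θ - θ'| * |v 1| :=
          add_le_add (mul_le_mul_of_nonneg_right hc (abs_nonneg _))
            (mul_le_mul_of_nonneg_right hs (abs_nonneg _))
      _ = |θ - θ'| * (|v 0| + |v 1|) := by ring
  · have e : Real.sin θ * v 0 + Real.cos θ * v 1 - (Real.sin θ' * v 0 + Real.cos θ' * v 1)
        = (Real.sin θ - Real.sin θ') * v 0 + (Real.cos θ - Real.cos θ') * v 1 := by ring
    rw [e]
    calc |(Real.sin θ - Real.sin θ') * v 0 + (Real.cos θ - Real.cos θ') * v 1|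
        ≤ |(Real.sin θ - Real.sin θ') * v 0| + |(Real.cos θ - Real.cos θ') * v 1| :=
          abs_add_le _ _
      _ = |Real.sin θ - Real.sin θ'| * |v 0| + |Real.cos θ - Real.cos θ'| * |v 1| := by
          rw [abs_mul, abs_mul]
      _ ≤ |θ - θ'| * |v 0| + |θ - θ'| * |v 1| :=
          add_le_add (mul_le_mul_of_nonneg_right hs (abs_nonneg _))
            (mul_le_mul_of_nonneg_right hc (abs_nonneg _))
      _ = |θ - θ'| * (|v 0| + |v 1|) := by ring

lemma Rot_cont (v : Fin 2 → ℝ) (j : Fin 2) (a b : ℝ) :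
    Continuous fun σ : ℝ => (Rot (a + b * σ) *ᵥ v) j := by
  fin_cases j <;> simp [Rot, Matrix.mulVec, dotProduct, Fin.sum_univ_two] <;> fun_prop

lemma Rot_cont' (v : Fin 2 → ℝ) (a b : ℝ) :
    Continuous fun σ : ℝ => (Rot (a + b * σ) *ᵥ v) :=
  continuous_pi fun j => Rot_cont v j a b

/-- Scalar interval-integral approximation bound. -/
lemma scalar_bound {f : ℝ → ℝ} {c M a : ℝ} (ha : 0 ≤ a) (hf : Continuous f)
    (h : ∀ σ ∈ Set.Ioc (0:ℝ) a, |f σ - c| ≤ M) :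
    |(∫ σ in (0:ℝ)..a, f σ) - a * c| ≤ M * a := by
  have hint : IntervalIntegrable f volume 0 a := hf.intervalIntegrable _ _
  have hconst : IntervalIntegrable (fun _ : ℝ => c) volume 0 a := intervalIntegrable_const
  have e : (∫ σ in (0:ℝ)..a, f σ) - a * c = ∫ σ in (0:ℝ)..a, (f σ - c) := by
    rw [intervalIntegral.integral_sub hint hconst, intervalIntegral.integral_const]
    simp [mul_comm]
  rw [e]
  have := intervalIntegral.norm_integral_le_of_norm_le_const (C := M)
    (f := fun σ => f σ - c) (a := (0:ℝ)) (b := a) ?_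
  · simpa [abs_of_nonneg ha] using this
  · intro x hx
    rw [Set.uIoc_of_le ha] at hx
    simpa using h x hx

/-- Key per-arc approximation bound. -/
lemma arc_bound (ψ₀ b ω a M : ℝ) (v : Fin 2 → ℝ) (ha : 0 ≤ a)
    (hb : |b - ψ₀| + |ω| * a ≤ M) (j : Fin 2) :
    |(∫ σ in (0:ℝ)..a, Rot (b + ω * σ) *ᵥ v) j - a * (Rot ψ₀ *ᵥ v) j|
      ≤ M * (|v 0| + |v 1|) * a := by
  have hint : IntervalIntegrable (fun σ : ℝ => Rot (b + ω * σ) *ᵥ v) volume 0 a :=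
    (Rot_cont' v b ω).intervalIntegrable _ _
  have happ : (∫ σ in (0:ℝ)..a, Rot (b + ω * σ) *ᵥ v) j
      = ∫ σ in (0:ℝ)..a, (Rot (b + ω * σ) *ᵥ v) j := by
    have := (ContinuousLinearMap.proj (R := ℝ) (φ := fun _ : Fin 2 => ℝ)
      j).intervalIntegral_comp_comm hint
    simpa using this.symm
  rw [happ]
  have hMS : M * (|v 0| + |v 1|) * a = (M * (|v 0| + |v 1|)) * a := by ring
  rw [hMS]
  refine scalar_bound ha (Rot_cont v j b ω) ?_
  intro σ hσ
  have h1 : |(Rot (b + ω * σ) *ᵥ v) j - (Rot ψ₀ *ᵥ v) j|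
      ≤ |b + ω * σ - ψ₀| * (|v 0| + |v 1|) := Rot_lip _ _ v j
  refine h1.trans (mul_le_mul_of_nonneg_right ?_ (by positivity))
  calc |b + ω * σ - ψ₀| = |(b - ψ₀) + ω * σ| := by ring_nf
    _ ≤ |b - ψ₀| + |ω * σ| := abs_add_le _ _
    _ = |b - ψ₀| + |ω| * |σ| := by rw [abs_mul]
    _ ≤ |b - ψ₀| + |ω| * a := by
        have : |σ| ≤ a := by rw [abs_of_pos hσ.1]; exact hσ.2
        exact add_le_add_right (mul_le_mul_of_nonneg_left this (abs_nonneg _)) _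
    _ ≤ M := hb

lemma normState_le (a : (Fin 2 → ℝ) × ℝ) :
    normState a ≤ |a.1 0| + |a.1 1| + |a.2| := by
  unfold normState
  have h : a.1 0 ^ 2 + a.1 1 ^ 2 + a.2 ^ 2 ≤ (|a.1 0| + |a.1 1| + |a.2|) ^ 2 := by
    nlinarith [abs_nonneg (a.1 0), abs_nonneg (a.1 1), abs_nonneg a.2,
      sq_abs (a.1 0), sq_abs (a.1 1), sq_abs a.2]
  calc Real.sqrt (a.1 0 ^ 2 + a.1 1 ^ 2 + a.2 ^ 2)
      ≤ Real.sqrt ((|a.1 0| + |a.1 1| + |a.2|) ^ 2) := Real.sqrt_le_sqrt h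
    _ = |a.1 0| + |a.1 1| + |a.2| := Real.sqrt_sq (by positivity)

/-- Second-order accuracy of the three-arc decomposition: following `p₁, p₂, p₃` for the
respective durations `λ₁ t, λ₂ t, λ₃ t` from `(x₀, ψ₀)` differs from following the single
averaged velocity `p̄ = λ₁ p₁ + λ₂ p₂ + λ₃ p₃` for duration `t` by at most `C t²` on
`t ∈ [0, 1]`, for some constant `C ≥ 0`. -/
theorem three_arc_second_order (x₀ : Fin 2 → ℝ) (ψ₀ : ℝ)
    (p₁ p₂ p₃ : (Fin 2 → ℝ) × ℝ) (l₁ l₂ l₃ : ℝ)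
    (h₁ : 0 ≤ l₁) (h₂ : 0 ≤ l₂) (h₃ : 0 ≤ l₃) :
    ∃ C : ℝ, 0 ≤ C ∧ ∀ t ∈ Set.Icc (0:ℝ) 1,
      normState
        (trajFrom (trajFrom (trajFrom (x₀, ψ₀) p₁ (l₁ * t)) p₂ (l₂ * t)) p₃ (l₃ * t)
          - trajFrom (x₀, ψ₀) (l₁ • p₁ + l₂ • p₂ + l₃ • p₃) t)
        ≤ C * t ^ 2 := by
  set pb : (Fin 2 → ℝ) × ℝ := l₁ • p₁ + l₂ • p₂ + l₃ • p₃ with hpb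
  set W : ℝ := l₁ * |p₁.2| + l₂ * |p₂.2| + l₃ * |p₃.2| with hW
  set S₁ : ℝ := |p₁.1 0| + |p₁.1 1| with hS₁
  set S₂ : ℝ := |p₂.1 0| + |p₂.1 1| with hS₂
  set S₃ : ℝ := |p₃.1 0| + |p₃.1 1| with hS₃
  set Sb : ℝ := |pb.1 0| + |pb.1 1| with hSb
  have hW0 : 0 ≤ W := by positivity
  refine ⟨2 * (W * (S₁ * l₁ + S₂ * l₂ + S₃ * l₃ + Sb)), by positivity, ?_⟩
  rintro t ⟨ht0, ht1⟩
  set C₀ : ℝ := W * (S₁ * l₁ + S₂ * l₂ + S₃ * l₃ + Sb) with hC₀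
  -- second components agree
  have hpb2 : pb.2 = l₁ * p₁.2 + l₂ * p₂.2 + l₃ * p₃.2 := rfl
  have hpb1 : pb.1 = l₁ • p₁.1 + l₂ • p₂.1 + l₃ • p₃.1 := rfl
  set X := trajFrom (trajFrom (trajFrom (x₀, ψ₀) p₁ (l₁ * t)) p₂ (l₂ * t)) p₃ (l₃ * t)
      - trajFrom (x₀, ψ₀) pb t with hX
  have hX2 : X.2 = 0 := by
    simp only [hX, Prod.snd_sub, trajFrom, hpb2]
    ring
  -- the three arc bounds and the averaged bound
  have hWt : ∀ σ ω l : ℝ, 0 ≤ l → l * |ω| ≤ W → True := fun _ _ _ _ _ => trivial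
  have key : ∀ j : Fin 2, |X.1 j| ≤ C₀ * t ^ 2 := by
    intro j
    have b₁ := arc_bound ψ₀ ψ₀ p₁.2 (l₁ * t) (W * t) p₁.1 (by positivity)
      (by
        rw [sub_self, abs_zero, zero_add]
        calc |p₁.2| * (l₁ * t) = (l₁ * |p₁.2|) * t := by ring
          _ ≤ W * t := by
              refine mul_le_mul_of_nonneg_right ?_ ht0
              rw [hW]; nlinarith [abs_nonneg p₂.2, abs_nonneg p₃.2]) j
    have b₂ := arc_bound ψ₀ (ψ₀ + p₁.2 * (l₁ * t)) p₂.2 (l₂ * t) (W * t) p₂.1 (by positivity)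
      (by
        have e : ψ₀ + p₁.2 * (l₁ * t) - ψ₀ = p₁.2 * (l₁ * t) := by ring
        rw [e, abs_mul, abs_of_nonneg (by positivity : (0:ℝ) ≤ l₁ * t)]
        calc |p₁.2| * (l₁ * t) + |p₂.2| * (l₂ * t)
            = (l₁ * |p₁.2| + l₂ * |p₂.2|) * t := by ring
          _ ≤ W * t := by
              refine mul_le_mul_of_nonneg_right ?_ ht0
              rw [hW]; nlinarith [abs_nonneg p₃.2]) j
    have b₃ := arc_bound ψ₀ (ψ₀ + p₁.2 * (l₁ * t) + p₂.2 * (l₂ * t)) p₃.2 (l₃ * t) (W * t)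
      p₃.1 (by positivity)
      (by
        have e : ψ₀ + p₁.2 * (l₁ * t) + p₂.2 * (l₂ * t) - ψ₀
            = p₁.2 * (l₁ * t) + p₂.2 * (l₂ * t) := by ring
        rw [e]
        calc |p₁.2 * (l₁ * t) + p₂.2 * (l₂ * t)| + |p₃.2| * (l₃ * t)
            ≤ |p₁.2 * (l₁ * t)| + |p₂.2 * (l₂ * t)| + |p₃.2| * (l₃ * t) := by
              have := abs_add_le (p₁.2 * (l₁ * t)) (p₂.2 * (l₂ * t))
              linarith
          _ = (l₁ * |p₁.2| + l₂ * |p₂.2| + l₃ * |p₃.2|) * t := by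
              simp only [abs_mul, abs_of_nonneg h₁, abs_of_nonneg h₂, abs_of_nonneg ht0]
              ring
          _ = W * t := by rw [hW]) j
    have bavg := arc_bound ψ₀ ψ₀ pb.2 t (W * t) pb.1 ht0
      (by
        rw [sub_self, abs_zero, zero_add, hpb2]
        have habs : |l₁ * p₁.2 + l₂ * p₂.2 + l₃ * p₃.2| ≤ W := by
          calc |l₁ * p₁.2 + l₂ * p₂.2 + l₃ * p₃.2|
              ≤ |l₁ * p₁.2 + l₂ * p₂.2| + |l₃ * p₃.2| := abs_add_le _ _
            _ ≤ |l₁ * p₁.2| + |l₂ * p₂.2| + |l₃ * p₃.2| := by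
                have := abs_add_le (l₁ * p₁.2) (l₂ * p₂.2)
                linarith
            _ = W := by
                rw [abs_mul, abs_mul, abs_mul, abs_of_nonneg h₁, abs_of_nonneg h₂,
                  abs_of_nonneg h₃, hW]
        calc |l₁ * p₁.2 + l₂ * p₂.2 + l₃ * p₃.2| * t ≤ W * t :=
          mul_le_mul_of_nonneg_right habs ht0) j
    -- linearity of Rot ψ₀ acting on the averaged velocity
    have hG : (Rot ψ₀ *ᵥ pb.1) j
        = l₁ * (Rot ψ₀ *ᵥ p₁.1) j + l₂ * (Rot ψ₀ *ᵥ p₂.1) j + l₃ * (Rot ψ₀ *ᵥ p₃.1) j := by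
      rw [hpb1]
      simp [Matrix.mulVec_add, Matrix.mulVec_smul]
      fin_cases j <;> simp <;> ring
    -- decompose the first component of X
    have hX1 : X.1 j
        = ((∫ σ in (0:ℝ)..(l₁ * t), Rot (ψ₀ + p₁.2 * σ) *ᵥ p₁.1) j
            - (l₁ * t) * (Rot ψ₀ *ᵥ p₁.1) j)
          + ((∫ σ in (0:ℝ)..(l₂ * t), Rot ((ψ₀ + p₁.2 * (l₁ * t)) + p₂.2 * σ) *ᵥ p₂.1) j
            - (l₂ * t) * (Rot ψ₀ *ᵥ p₂.1) j)
          + ((∫ σ in (0:ℝ)..(l₃ * t),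
                Rot ((ψ₀ + p₁.2 * (l₁ * t) + p₂.2 * (l₂ * t)) + p₃.2 * σ) *ᵥ p₃.1) j
            - (l₃ * t) * (Rot ψ₀ *ᵥ p₃.1) j)
          - ((∫ σ in (0:ℝ)..t, Rot (ψ₀ + pb.2 * σ) *ᵥ pb.1) j
            - t * (Rot ψ₀ *ᵥ pb.1) j) := by
      simp only [hX, Prod.fst_sub, trajFrom, Pi.sub_apply, Pi.add_apply]
      rw [hG]
      ring
    rw [hX1]
    have tri : ∀ a b c d : ℝ, |a + b + c - d| ≤ |a| + |b| + |c| + |d| := by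
      intro a b c d
      calc |a + b + c - d| ≤ |a + b + c| + |d| := by
            rw [sub_eq_add_neg]
            simpa using abs_add_le (a + b + c) (-d)
        _ ≤ |a + b| + |c| + |d| := by have := abs_add_le (a + b) c; linarith
        _ ≤ |a| + |b| + |c| + |d| := by have := abs_add_le a b; linarith
    refine (tri _ _ _ _).trans ?_
    calc _ ≤ (W * t) * S₁ * (l₁ * t) + (W * t) * S₂ * (l₂ * t) + (W * t) * S₃ * (l₃ * t)
          + (W * t) * Sb * t := by
          exact add_le_add (add_le_add (add_le_add b₁ b₂) b₃) bavg
      _ = C₀ * t ^ 2 := by rw [hC₀]; ring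
  calc normState X ≤ |X.1 0| + |X.1 1| + |X.2| := normState_le X
    _ ≤ C₀ * t ^ 2 + C₀ * t ^ 2 + 0 := by
        rw [hX2, abs_zero]
        exact add_le_add (add_le_add (key 0) (key 1)) le_rfl
    _ = 2 * C₀ * t ^ 2 := by ring
end

section
/- (Invertibility of the integrated 3D rotation.) Let ω ∈ ℝ³ and t̄ > 0 satisfy ‖ω‖₂ · t̄ ∈ [0, π]. Then the 3×3 matrix ∫₀^{t̄} exp(s [ω]ₓ) ds is invertible (in particular, for ω = 0 it equals t̄ · I). -/
open Matrix NormedSpace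

/-- The Euclidean norm on `ℝ³` (represented as `Fin 3 → ℝ`). -/
noncomputable def norm3 (u : Fin 3 → ℝ) : ℝ := Real.sqrt (u 0 ^ 2 + u 1 ^ 2 + u 2 ^ 2)

/-- The cross-product (skew-symmetric) matrix `[ω]ₓ` of `ω ∈ ℝ³`, satisfying
`[ω]ₓ u = ω × u` for all `u`. -/
def skew (ω : Fin 3 → ℝ) : Matrix (Fin 3) (Fin 3) ℝ :=
  !![0, -ω 2, ω 1; ω 2, 0, -ω 0; -ω 1, ω 0, 0]

lemma skew_mul_mul (ω : Fin 3 → ℝ) :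
    skew ω * skew ω * skew ω = (-(ω 0 ^ 2 + ω 1 ^ 2 + ω 2 ^ 2)) • skew ω := by
  ext i j
  fin_cases i <;> fin_cases j <;>
    simp [skew, Matrix.mul_apply, Fin.sum_univ_succ] <;> ring

/-- Rodrigues' formula for the matrix exponential of a scaled skew matrix. -/
lemma rodrigues (ω : Fin 3 → ℝ) {θ : ℝ} (hθ : 0 < θ)
    (hq : θ ^ 2 = ω 0 ^ 2 + ω 1 ^ 2 + ω 2 ^ 2) (s : ℝ) :
    exp (s • skew ω) =
      1 + (Real.sin (θ * s) / θ) • skew ω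
        + ((1 - Real.cos (θ * s)) / θ ^ 2) • (skew ω * skew ω) := by
  letI : SeminormedRing (Matrix (Fin 3) (Fin 3) ℝ) := Matrix.linftyOpSemiNormedRing
  letI : NormedRing (Matrix (Fin 3) (Fin 3) ℝ) := Matrix.linftyOpNormedRing
  letI : NormedAlgebra ℝ (Matrix (Fin 3) (Fin 3) ℝ) := Matrix.linftyOpNormedAlgebra
  set K := skew ω with hK
  set R : ℝ → Matrix (Fin 3) (Fin 3) ℝ := fun u =>
    1 + (Real.sin (θ * u) / θ) • K + ((1 - Real.cos (θ * u)) / θ ^ 2) • (K * K) with hR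
  have hKR : ∀ u : ℝ, K * R u =
      Real.cos (θ * u) • K + (Real.sin (θ * u) / θ) • (K * K) := by
    intro u
    have h3 : K * (K * K) = (-(θ ^ 2)) • K := by
      rw [← mul_assoc, skew_mul_mul, hq]
    rw [hR]
    simp only [mul_add, mul_one, Matrix.mul_smul, h3, smul_smul]
    have hc : (1 - Real.cos (θ * u)) / θ ^ 2 * -(θ ^ 2) = Real.cos (θ * u) - 1 := by
      field_simp
      ring
    rw [hc]
    module
  have hsin : ∀ u : ℝ, HasDerivAt (fun v : ℝ => Real.sin (θ * v) / θ)
      (Real.cos (θ * u)) u := by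
    intro u
    have h1 : HasDerivAt (fun v : ℝ => θ * v) θ u := by
      simpa using (hasDerivAt_id u).const_mul θ
    have h3 := ((Real.hasDerivAt_sin (θ * u)).comp u h1).div_const θ
    refine h3.congr_deriv ?_
    field_simp
  have hcos : ∀ u : ℝ, HasDerivAt (fun v : ℝ => (1 - Real.cos (θ * v)) / θ ^ 2)
      (Real.sin (θ * u) / θ) u := by
    intro u
    have h1 : HasDerivAt (fun v : ℝ => θ * v) θ u := by
      simpa using (hasDerivAt_id u).const_mul θ
    have h3 := ((hasDerivAt_const u (1 : ℝ)).sub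
      ((Real.hasDerivAt_cos (θ * u)).comp u h1)).div_const (θ ^ 2)
    refine h3.congr_deriv ?_
    field_simp
    ring
  have hR' : ∀ u : ℝ, HasDerivAt R
      (Real.cos (θ * u) • K + (Real.sin (θ * u) / θ) • (K * K)) u := by
    intro u
    exact (((hsin u).smul_const K).const_add 1).add ((hcos u).smul_const (K * K))
  set g : ℝ → Matrix (Fin 3) (Fin 3) ℝ := fun u => exp (u • (-K)) * R u with hg
  have hgd : ∀ u : ℝ, HasDerivAt g 0 u := by
    intro u
    have h1 : HasDerivAt (fun v : ℝ => exp (v • (-K))) (exp (u • (-K)) * (-K)) u :=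
      hasDerivAt_exp_smul_const (-K) u
    have h2 := h1.mul (hR' u)
    refine h2.congr_deriv ?_
    rw [mul_assoc, neg_mul, hKR u, mul_neg, neg_add_cancel]
  have hconst : ∀ u : ℝ, g u = g 0 := by
    intro u
    exact is_const_of_deriv_eq_zero (fun x => (hgd x).differentiableAt)
      (fun x => (hgd x).deriv) u 0
  have hg0 : g 0 = 1 := by
    simp [hg, hR]
  have hinv2 : exp (s • K) * exp (s • (-K)) = 1 := by
    rw [← Matrix.exp_add_of_commute _ _
      (((Commute.refl K).neg_right.smul_left s).smul_right s)]
    simp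
  have h1 : exp (s • (-K)) * R s = 1 := by show g s = 1; rw [hconst s, hg0]
  calc exp (s • K) = exp (s • K) * (exp (s • (-K)) * R s) := by rw [h1, mul_one]
    _ = (exp (s • K) * exp (s • (-K))) * R s := by rw [mul_assoc]
    _ = R s := by rw [hinv2, one_mul]

lemma integral_entry {θ : ℝ} (hθ : θ ≠ 0) (T c1 c2 c3 : ℝ) :
    (∫ s in (0:ℝ)..T,
      (c1 + Real.sin (θ * s) / θ * c2 + (1 - Real.cos (θ * s)) / θ ^ 2 * c3)) =
      T * c1 + (1 - Real.cos (θ * T)) / θ ^ 2 * c2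
        + (θ * T - Real.sin (θ * T)) / θ ^ 3 * c3 := by
  have key : ∀ s : ℝ, HasDerivAt
      (fun u : ℝ => u * c1 + (1 - Real.cos (θ * u)) / θ ^ 2 * c2
        + (θ * u - Real.sin (θ * u)) / θ ^ 3 * c3)
      (c1 + Real.sin (θ * s) / θ * c2 + (1 - Real.cos (θ * s)) / θ ^ 2 * c3) s := by
    intro s
    have hlin : ∀ u : ℝ, HasDerivAt (fun v : ℝ => θ * v) θ u := fun u => by
      simpa using (hasDerivAt_id u).const_mul θ
    have h1 : HasDerivAt (fun u : ℝ => u * c1) c1 s := by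
      simpa using (hasDerivAt_id s).mul_const c1
    have h2 : HasDerivAt (fun u : ℝ => (1 - Real.cos (θ * u)) / θ ^ 2 * c2)
        (Real.sin (θ * s) / θ * c2) s := by
      have := (((hasDerivAt_const s (1:ℝ)).sub
        ((Real.hasDerivAt_cos (θ * s)).comp s (hlin s))).div_const (θ ^ 2)).mul_const c2
      refine this.congr_deriv ?_
      field_simp
      ring
    have h3 : HasDerivAt (fun u : ℝ => (θ * u - Real.sin (θ * u)) / θ ^ 3 * c3)
        ((1 - Real.cos (θ * s)) / θ ^ 2 * c3) s := by
      have := (((hlin s).sub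
        ((Real.hasDerivAt_sin (θ * s)).comp s (hlin s))).div_const (θ ^ 3)).mul_const c3
      refine this.congr_deriv ?_
      field_simp
    exact (h1.add h2).add h3
  rw [intervalIntegral.integral_eq_sub_of_hasDerivAt (fun s _ => key s)
    ((Continuous.intervalIntegrable (by continuity) _ _))]
  simp

/-- Invertibility of the integrated 3D rotation: if `‖ω‖₂ · T ∈ [0, π]` with `T > 0`, then
the (entrywise) integral `∫₀ᵀ exp (s [ω]ₓ) ds` is an invertible 3×3 matrix; in particular,
for `ω = 0` it equals `T • I`. -/
theorem integrated_rotation_isUnit (ω : Fin 3 → ℝ) (T : ℝ) (hT : 0 < T)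
    (hbound : norm3 ω * T ∈ Set.Icc 0 Real.pi) :
    IsUnit (Matrix.of fun i j : Fin 3 => ∫ s in (0:ℝ)..T, exp (s • skew ω) i j) ∧
    (ω = 0 →
      (Matrix.of fun i j : Fin 3 => ∫ s in (0:ℝ)..T, exp (s • skew ω) i j)
        = T • (1 : Matrix (Fin 3) (Fin 3) ℝ)) := by
  rcases eq_or_ne ω 0 with h0 | h0
  · -- ω = 0
    subst h0
    have hs0 : skew 0 = 0 := by
      ext i j; fin_cases i <;> fin_cases j <;> simp [skew, Matrix.vecHead, Matrix.vecTail]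
    have hMeq : (Matrix.of fun i j : Fin 3 => ∫ s in (0:ℝ)..T, exp (s • skew 0) i j)
        = T • (1 : Matrix (Fin 3) (Fin 3) ℝ) := by
      ext i j
      simp [hs0, exp_zero, intervalIntegral.integral_const, smul_eq_mul]
    refine ⟨?_, fun _ => hMeq⟩
    rw [hMeq]
    apply (Matrix.isUnit_iff_isUnit_det _).2
    rw [Matrix.det_smul, Matrix.det_one]
    exact isUnit_iff_ne_zero.2 (by positivity)
  · -- ω ≠ 0
    set q : ℝ := ω 0 ^ 2 + ω 1 ^ 2 + ω 2 ^ 2 with hqdef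
    have hqpos : 0 < q := by
      have h : ω 0 ≠ 0 ∨ ω 1 ≠ 0 ∨ ω 2 ≠ 0 := by
        by_contra h
        push_neg at h
        exact h0 (funext fun i => by fin_cases i <;> simp [h.1, h.2.1, h.2.2])
      rcases h with h | h | h <;> positivity
    set θ : ℝ := norm3 ω with hθdef
    have hθ : 0 < θ := Real.sqrt_pos.2 hqpos
    have hθ2 : θ ^ 2 = q := Real.sq_sqrt hqpos.le
    set K := skew ω with hK
    set A : ℝ := (1 - Real.cos (θ * T)) / θ ^ 2 with hA
    set B : ℝ := (θ * T - Real.sin (θ * T)) / θ ^ 3 with hB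
    have hM : (Matrix.of fun i j : Fin 3 => ∫ s in (0:ℝ)..T, exp (s • skew ω) i j)
        = T • (1 : Matrix (Fin 3) (Fin 3) ℝ) + A • K + B • (K * K) := by
      ext i j
      have hent : ∀ s : ℝ, exp (s • skew ω) i j =
          (1 : Matrix (Fin 3) (Fin 3) ℝ) i j + Real.sin (θ * s) / θ * K i j
            + (1 - Real.cos (θ * s)) / θ ^ 2 * (K * K) i j := by
        intro s
        rw [rodrigues ω hθ hθ2 s]
        simp [Matrix.add_apply, Matrix.smul_apply, smul_eq_mul]
        rfl
      simp only [Matrix.of_apply]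
      rw [show (fun s : ℝ => exp (s • skew ω) i j) = fun s : ℝ =>
          ((1 : Matrix (Fin 3) (Fin 3) ℝ) i j + Real.sin (θ * s) / θ * K i j
            + (1 - Real.cos (θ * s)) / θ ^ 2 * (K * K) i j) from funext hent]
      rw [integral_entry hθ.ne' T _ _ _]
      simp [Matrix.add_apply, Matrix.smul_apply, smul_eq_mul, hA, hB]
    have hcos1 : Real.cos (θ * T) < 1 := by
      have hpos : 0 < θ * T := mul_pos hθ hT
      have hle : θ * T ≤ Real.pi := hbound.2
      have h2pi : θ * T < 2 * Real.pi := lt_of_le_of_lt hle (by linarith [Real.pi_pos])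
      refine lt_of_le_of_ne (Real.cos_le_one _) ?_
      intro h
      have := (Real.cos_eq_one_iff_of_lt_of_lt
        (by linarith [Real.pi_pos] : -(2 * Real.pi) < θ * T) h2pi).1 h
      linarith
    have hApos : 0 < A := by
      have h1 : 0 < 1 - Real.cos (θ * T) := by linarith
      rw [hA]
      exact div_pos h1 (by positivity)
    have hdet : Matrix.det (T • (1 : Matrix (Fin 3) (Fin 3) ℝ) + A • K + B • (K * K))
        = T * ((T - B * q) ^ 2 + A ^ 2 * q) := by
      rw [hK, hqdef]
      simp [skew, Matrix.det_fin_three, Matrix.mul_apply, Fin.sum_univ_succ,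
        Matrix.smul_apply, Matrix.one_apply, Matrix.add_apply, smul_eq_mul]
      ring
    have hdpos : 0 < T * ((T - B * q) ^ 2 + A ^ 2 * q) := by positivity
    refine ⟨?_, fun h => absurd h h0⟩
    rw [hM]
    apply (Matrix.isUnit_iff_isUnit_det _).2
    rw [hdet]
    exact isUnit_iff_ne_zero.2 hdpos.ne'
end
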